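/- Let O be the Hurwitz order in the quaternion algebra D = ℍ[ℚ, -1, -1], namely the subring of D spanned over ℤ by 1, i, j, and ω = (1 + i + j + ij)/2. Then the canonical ring homomorphism O → O/2O induces a surjective group homomorphism O^× → (O/2O)^× on unit groups. -/

import Mathlib

open Quaternion

namespace Stmt17Aux

abbrev Q := ℍ[ℚ, -1, -1]

/-- generic element of the Hurwitz order -/
def combo (m n p q : ℤ) : Q :=
  ⟨(m : ℚ) + q / 2, (n : ℚ) + q / 2, (p : ℚ) + q / 2, (q : ℚ) / 2⟩

@[simp] lemma combo_re (m n p q : ℤ) : (combo m n p q).re = (m:ℚ) + q/2 := rfl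
@[simp] lemma combo_imI (m n p q : ℤ) : (combo m n p q).imI = (n:ℚ) + q/2 := rfl
@[simp] lemma combo_imJ (m n p q : ℤ) : (combo m n p q).imJ = (p:ℚ) + q/2 := rfl
@[simp] lemma combo_imK (m n p q : ℤ) : (combo m n p q).imK = (q:ℚ)/2 := rfl

variable (O : Subring Q)
    (hO : (O : Set Q) =
      (Submodule.span ℤ ({1, ⟨0, 1, 0, 0⟩, ⟨0, 0, 1, 0⟩,
        ⟨1/2, 1/2, 1/2, 1/2⟩} : Set Q) : Set Q))

include hO

lemma combo_mem (m n p q : ℤ) : combo m n p q ∈ O := by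
  have h1 : (1:Q) ∈ O := O.one_mem
  have hI : (⟨0,1,0,0⟩ : Q) ∈ O := by
    rw [← SetLike.mem_coe, hO]
    exact Submodule.subset_span (by simp [Set.mem_insert_iff])
  have hJ : (⟨0,0,1,0⟩ : Q) ∈ O := by
    rw [← SetLike.mem_coe, hO]
    exact Submodule.subset_span (by simp [Set.mem_insert_iff])
  have hW : (⟨1/2,1/2,1/2,1/2⟩ : Q) ∈ O := by
    rw [← SetLike.mem_coe, hO]
    exact Submodule.subset_span (by simp [Set.mem_insert_iff])
  have key : combo m n p q =
      m • (1:Q) + n • (⟨0,1,0,0⟩:Q) + p • (⟨0,0,1,0⟩:Q) + q • (⟨1/2,1/2,1/2,1/2⟩:Q) := by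
    ext <;> simp [combo, zsmul_eq_mul] <;> push_cast <;> ring
  rw [key]
  exact O.add_mem (O.add_mem (O.add_mem (O.zsmul_mem h1 m) (O.zsmul_mem hI n))
    (O.zsmul_mem hJ p)) (O.zsmul_mem hW q)

omit hO in
lemma two_mul_combo (m n p q : ℤ) :
    (2 : Q) * combo m n p q = combo (2*m) (2*n) (2*p) (2*q) := by
  have h : (2 : Q) * combo m n p q = combo m n p q + combo m n p q := two_mul _
  rw [h]; ext <;> simp [combo] <;> push_cast <;> ring

lemma coords {a : Q} (ha : a ∈ O) : ∃ m n p q : ℤ, a = combo m n p q := by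
  have h : a ∈ Submodule.span ℤ ({1, ⟨0,1,0,0⟩, ⟨0,0,1,0⟩, ⟨1/2,1/2,1/2,1/2⟩} : Set Q) := by
    rw [← SetLike.mem_coe, hO] at ha; exact ha
  rw [Submodule.mem_span_insert] at h
  obtain ⟨m, x, hx, rfl⟩ := h
  rw [Submodule.mem_span_insert] at hx
  obtain ⟨n, y, hy, rfl⟩ := hx
  rw [Submodule.mem_span_insert] at hy
  obtain ⟨p, z, hz, rfl⟩ := hy
  rw [Submodule.mem_span_singleton] at hz
  obtain ⟨q, rfl⟩ := hz
  exact ⟨m, n, p, q, by ext <;> simp [combo, zsmul_eq_mul] <;> push_cast <;> ring⟩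

lemma not_half {V : Q} (hV : V ∈ O) : (1:Q) ≠ 2 * V := by
  intro h
  obtain ⟨m, n, p, q, rfl⟩ := coords O hO hV
  rw [two_mul] at h
  have h1 := congrArg QuaternionAlgebra.re h
  have h4 := congrArg QuaternionAlgebra.imK h
  simp [combo] at h1 h4
  have hq : q = 0 := by exact_mod_cast (by linarith : (q:ℚ) = 0)
  subst hq
  have : (1:ℚ) = m + m := by push_cast at h1 ⊢; linarith
  have : (1:ℤ) = m + m := by exact_mod_cast this
  omega


lemma bad {a b s1 s2 : O}
    (hab : (a:Q) * b = 1 + 2 * s1) (hba : (b:Q) * a = 1 + 2 * s2)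
    (r t s : Q) (hr : r ∈ O) (ht : t ∈ O) (hs : s ∈ O)
    (hrr : r * r = 2 * t) (has : (a:Q) = r + 2 * s) : False := by
  set T : Q := t + r*s + s*r + 2*(s*s) with hT
  have hTm : T ∈ O := O.add_mem (O.add_mem (O.add_mem ht (O.mul_mem hr hs))
    (O.mul_mem hs hr)) (by rw [two_mul]; exact O.add_mem (O.mul_mem hs hs) (O.mul_mem hs hs))
  have haa : (a:Q) * a = 2 * T := by
    rw [has]
    calc (r+2*s)*(r+2*s) = r*r + 2*(r*s + s*r + 2*(s*s)) := by noncomm_ring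
      _ = 2*T := by rw [hrr, hT]; noncomm_ring
  have e1 : ((b:Q)*a)*((a:Q)*b) = 1 + 2*(s2 + s1 + 2*(s2*s1)) := by
    rw [hba, hab]; noncomm_ring
  have e2 : ((b:Q)*a)*((a:Q)*b) = 2*((b:Q)*T*b) := by
    calc ((b:Q)*a)*((a:Q)*b) = (b:Q)*((a:Q)*a)*b := by noncomm_ring
      _ = 2*((b:Q)*T*b) := by rw [haa]; noncomm_ring
  have e3 : (1:Q) + 2*((s2:Q) + s1 + 2*(s2*s1)) = 2*((b:Q)*T*b) := e1.symm.trans e2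
  refine not_half O hO (V := (b:Q)*T*b - ((s2:Q) + s1 + 2*(s2*s1))) ?_ ?_
  · exact O.sub_mem (O.mul_mem (O.mul_mem b.2 hTm) b.2)
      (O.add_mem (O.add_mem s2.2 s1.2) (by rw [two_mul]; exact O.add_mem (O.mul_mem s2.2 s1.2) (O.mul_mem s2.2 s1.2)))
  · rw [mul_sub, ← e3]; noncomm_ring

omit hO in
lemma good (c : RingCon O) (hc : ∀ a b : O, c a b ↔ ∃ v : O, a - b = 2 * v)
    {w : (c.Quotient)ˣ} {a : O}
    (ha : (RingCon.mk' c) a = (w : c.Quotient))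
    (u v s : Q) (hu : u ∈ O) (hv : v ∈ O) (hs : s ∈ O)
    (huv : u * v = 1) (hvu : v * u = 1)
    (hdiff : (a : Q) - u = 2 * s) :
    ∃ x : Oˣ, Units.map (RingCon.mk' c).toMonoidHom x = w := by
  refine ⟨⟨⟨u, hu⟩, ⟨v, hv⟩, Subtype.ext huv, Subtype.ext hvu⟩, ?_⟩
  apply Units.ext
  show (RingCon.mk' c) ⟨u, hu⟩ = (w : c.Quotient)
  rw [← ha]
  refine c.eq.mpr ((hc _ _).mpr ⟨⟨-s, O.neg_mem hs⟩, Subtype.ext ?_⟩)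
  show u - (a:Q) = 2 * (-s)
  rw [mul_neg, ← hdiff, neg_sub]

end Stmt17Aux

set_option maxHeartbeats 4000000 in
/-- Let `O` be the Hurwitz order in `D = ℍ[ℚ, -1, -1]`,
i.e. the subring of `D` whose underlying set is the `ℤ`-span of
`1, i, j, ω = (1 + i + j + ij)/2`.  Then the canonical ring homomorphism
`O → O/2O` (formalized as the quotient map for the ring congruence `c`
identifying `a` and `b` whenever `a - b ∈ 2O`) induces a surjective group
homomorphism `Oˣ → (O/2O)ˣ` on unit groups. -/
theorem stmt_17 (O : Subring (ℍ[ℚ, -1, -1]))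
    (hO : (O : Set ℍ[ℚ, -1, -1]) =
      (Submodule.span ℤ ({1, ⟨0, 1, 0, 0⟩, ⟨0, 0, 1, 0⟩,
        ⟨1/2, 1/2, 1/2, 1/2⟩} : Set ℍ[ℚ, -1, -1]) : Set ℍ[ℚ, -1, -1]))
    (c : RingCon O)
    (hc : ∀ a b : O, c a b ↔ ∃ v : O, a - b = 2 * v) :
    Function.Surjective (Units.map (RingCon.mk' c).toMonoidHom) := by
  intro w
  obtain ⟨a, ha⟩ : ∃ a : O, (RingCon.mk' c) a = (w : c.Quotient) := Quot.exists_rep _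
  obtain ⟨b, hb⟩ : ∃ b : O, (RingCon.mk' c) b = ((w⁻¹ : (c.Quotient)ˣ) : c.Quotient) :=
    Quot.exists_rep _
  have hab : c (a * b) 1 := by
    apply c.eq.mp
    show (RingCon.mk' c) (a * b) = (RingCon.mk' c) 1
    rw [map_mul, ha, hb, map_one]
    exact w.mul_inv
  have hba : c (b * a) 1 := by
    apply c.eq.mp
    show (RingCon.mk' c) (b * a) = (RingCon.mk' c) 1
    rw [map_mul, ha, hb, map_one]
    exact w.inv_mul
  obtain ⟨s1, hs1⟩ := (hc _ _).mp hab
  obtain ⟨s2, hs2⟩ := (hc _ _).mp hba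
  have hab' : (a : Stmt17Aux.Q) * b = 1 + 2 * (s1 : Stmt17Aux.Q) := by
    have h := congrArg (Subtype.val) hs1
    push_cast at h
    exact sub_eq_iff_eq_add'.mp h
  have hba' : (b : Stmt17Aux.Q) * a = 1 + 2 * (s2 : Stmt17Aux.Q) := by
    have h := congrArg (Subtype.val) hs2
    push_cast at h
    exact sub_eq_iff_eq_add'.mp h
  obtain ⟨m0, n0, p0, q0, hval⟩ := Stmt17Aux.coords O hO a.2
  obtain ⟨m, e1, he1, rfl⟩ : ∃ m' e, (e = 0 ∨ e = 1) ∧ m0 = 2 * m' + e :=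
    ⟨m0 / 2, m0 % 2, by omega, by omega⟩
  obtain ⟨n, e2, he2, rfl⟩ : ∃ n' e, (e = 0 ∨ e = 1) ∧ n0 = 2 * n' + e :=
    ⟨n0 / 2, n0 % 2, by omega, by omega⟩
  obtain ⟨p, e3, he3, rfl⟩ : ∃ p' e, (e = 0 ∨ e = 1) ∧ p0 = 2 * p' + e :=
    ⟨p0 / 2, p0 % 2, by omega, by omega⟩
  obtain ⟨q, e4, he4, rfl⟩ : ∃ q' e, (e = 0 ∨ e = 1) ∧ q0 = 2 * q' + e :=
    ⟨q0 / 2, q0 % 2, by omega, by omega⟩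
  rcases he1 with rfl | rfl <;> rcases he2 with rfl | rfl <;>
    rcases he3 with rfl | rfl <;> rcases he4 with rfl | rfl
  · exact (Stmt17Aux.bad O hO hab' hba' (Stmt17Aux.combo (0) (0) (0) (0)) (Stmt17Aux.combo (0) (0) (0) (0)) (Stmt17Aux.combo m n p q)
      (Stmt17Aux.combo_mem O hO _ _ _ _) (Stmt17Aux.combo_mem O hO _ _ _ _)
      (Stmt17Aux.combo_mem O hO _ _ _ _)
      (by rw [Stmt17Aux.two_mul_combo]; ext <;> simp [Stmt17Aux.combo, QuaternionAlgebra.re_mul, QuaternionAlgebra.imI_mul, QuaternionAlgebra.imJ_mul, QuaternionAlgebra.imK_mul] <;> norm_num)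
      (by rw [hval, Stmt17Aux.two_mul_combo]; ext <;> simp [Stmt17Aux.combo] <;> push_cast <;> ring)).elim
  · exact Stmt17Aux.good O c hc ha (Stmt17Aux.combo (0) (0) (0) (1)) (Stmt17Aux.combo (1) (0) (0) (-1)) (Stmt17Aux.combo (m) (n) (p) (q))
      (Stmt17Aux.combo_mem O hO _ _ _ _) (Stmt17Aux.combo_mem O hO _ _ _ _)
      (Stmt17Aux.combo_mem O hO _ _ _ _)
      (by ext <;> simp [Stmt17Aux.combo, QuaternionAlgebra.re_mul, QuaternionAlgebra.imI_mul, QuaternionAlgebra.imJ_mul, QuaternionAlgebra.imK_mul] <;> norm_num)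
      (by ext <;> simp [Stmt17Aux.combo, QuaternionAlgebra.re_mul, QuaternionAlgebra.imI_mul, QuaternionAlgebra.imJ_mul, QuaternionAlgebra.imK_mul] <;> norm_num)
      (by rw [hval, Stmt17Aux.two_mul_combo]; ext <;> simp [Stmt17Aux.combo] <;> push_cast <;> ring)
  · exact Stmt17Aux.good O c hc ha (Stmt17Aux.combo (0) (0) (1) (0)) (Stmt17Aux.combo (0) (0) (-1) (0)) (Stmt17Aux.combo (m) (n) (p) (q))
      (Stmt17Aux.combo_mem O hO _ _ _ _) (Stmt17Aux.combo_mem O hO _ _ _ _)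
      (Stmt17Aux.combo_mem O hO _ _ _ _)
      (by ext <;> simp [Stmt17Aux.combo, QuaternionAlgebra.re_mul, QuaternionAlgebra.imI_mul, QuaternionAlgebra.imJ_mul, QuaternionAlgebra.imK_mul] <;> norm_num)
      (by ext <;> simp [Stmt17Aux.combo, QuaternionAlgebra.re_mul, QuaternionAlgebra.imI_mul, QuaternionAlgebra.imJ_mul, QuaternionAlgebra.imK_mul] <;> norm_num)
      (by rw [hval, Stmt17Aux.two_mul_combo]; ext <;> simp [Stmt17Aux.combo] <;> push_cast <;> ring)
  · exact Stmt17Aux.good O c hc ha (Stmt17Aux.combo (0) (0) (-1) (1)) (Stmt17Aux.combo (1) (0) (1) (-1)) (Stmt17Aux.combo (m) (n) (p + 1) (q))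
      (Stmt17Aux.combo_mem O hO _ _ _ _) (Stmt17Aux.combo_mem O hO _ _ _ _)
      (Stmt17Aux.combo_mem O hO _ _ _ _)
      (by ext <;> simp [Stmt17Aux.combo, QuaternionAlgebra.re_mul, QuaternionAlgebra.imI_mul, QuaternionAlgebra.imJ_mul, QuaternionAlgebra.imK_mul] <;> norm_num)
      (by ext <;> simp [Stmt17Aux.combo, QuaternionAlgebra.re_mul, QuaternionAlgebra.imI_mul, QuaternionAlgebra.imJ_mul, QuaternionAlgebra.imK_mul] <;> norm_num)
      (by rw [hval, Stmt17Aux.two_mul_combo]; ext <;> simp [Stmt17Aux.combo] <;> push_cast <;> ring)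
  · exact Stmt17Aux.good O c hc ha (Stmt17Aux.combo (0) (1) (0) (0)) (Stmt17Aux.combo (0) (-1) (0) (0)) (Stmt17Aux.combo (m) (n) (p) (q))
      (Stmt17Aux.combo_mem O hO _ _ _ _) (Stmt17Aux.combo_mem O hO _ _ _ _)
      (Stmt17Aux.combo_mem O hO _ _ _ _)
      (by ext <;> simp [Stmt17Aux.combo, QuaternionAlgebra.re_mul, QuaternionAlgebra.imI_mul, QuaternionAlgebra.imJ_mul, QuaternionAlgebra.imK_mul] <;> norm_num)
      (by ext <;> simp [Stmt17Aux.combo, QuaternionAlgebra.re_mul, QuaternionAlgebra.imI_mul, QuaternionAlgebra.imJ_mul, QuaternionAlgebra.imK_mul] <;> norm_num)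
      (by rw [hval, Stmt17Aux.two_mul_combo]; ext <;> simp [Stmt17Aux.combo] <;> push_cast <;> ring)
  · exact Stmt17Aux.good O c hc ha (Stmt17Aux.combo (0) (-1) (0) (1)) (Stmt17Aux.combo (1) (1) (0) (-1)) (Stmt17Aux.combo (m) (n + 1) (p) (q))
      (Stmt17Aux.combo_mem O hO _ _ _ _) (Stmt17Aux.combo_mem O hO _ _ _ _)
      (Stmt17Aux.combo_mem O hO _ _ _ _)
      (by ext <;> simp [Stmt17Aux.combo, QuaternionAlgebra.re_mul, QuaternionAlgebra.imI_mul, QuaternionAlgebra.imJ_mul, QuaternionAlgebra.imK_mul] <;> norm_num)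
      (by ext <;> simp [Stmt17Aux.combo, QuaternionAlgebra.re_mul, QuaternionAlgebra.imI_mul, QuaternionAlgebra.imJ_mul, QuaternionAlgebra.imK_mul] <;> norm_num)
      (by rw [hval, Stmt17Aux.two_mul_combo]; ext <;> simp [Stmt17Aux.combo] <;> push_cast <;> ring)
  · exact (Stmt17Aux.bad O hO hab' hba' (Stmt17Aux.combo (0) (1) (1) (0)) (Stmt17Aux.combo (-1) (0) (0) (0)) (Stmt17Aux.combo m n p q)
      (Stmt17Aux.combo_mem O hO _ _ _ _) (Stmt17Aux.combo_mem O hO _ _ _ _)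
      (Stmt17Aux.combo_mem O hO _ _ _ _)
      (by rw [Stmt17Aux.two_mul_combo]; ext <;> simp [Stmt17Aux.combo, QuaternionAlgebra.re_mul, QuaternionAlgebra.imI_mul, QuaternionAlgebra.imJ_mul, QuaternionAlgebra.imK_mul] <;> norm_num)
      (by rw [hval, Stmt17Aux.two_mul_combo]; ext <;> simp [Stmt17Aux.combo] <;> push_cast <;> ring)).elim
  · exact Stmt17Aux.good O c hc ha (Stmt17Aux.combo (0) (-1) (-1) (1)) (Stmt17Aux.combo (1) (1) (1) (-1)) (Stmt17Aux.combo (m) (n + 1) (p + 1) (q))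
      (Stmt17Aux.combo_mem O hO _ _ _ _) (Stmt17Aux.combo_mem O hO _ _ _ _)
      (Stmt17Aux.combo_mem O hO _ _ _ _)
      (by ext <;> simp [Stmt17Aux.combo, QuaternionAlgebra.re_mul, QuaternionAlgebra.imI_mul, QuaternionAlgebra.imJ_mul, QuaternionAlgebra.imK_mul] <;> norm_num)
      (by ext <;> simp [Stmt17Aux.combo, QuaternionAlgebra.re_mul, QuaternionAlgebra.imI_mul, QuaternionAlgebra.imJ_mul, QuaternionAlgebra.imK_mul] <;> norm_num)
      (by rw [hval, Stmt17Aux.two_mul_combo]; ext <;> simp [Stmt17Aux.combo] <;> push_cast <;> ring)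
  · exact Stmt17Aux.good O c hc ha (Stmt17Aux.combo (1) (0) (0) (0)) (Stmt17Aux.combo (1) (0) (0) (0)) (Stmt17Aux.combo (m) (n) (p) (q))
      (Stmt17Aux.combo_mem O hO _ _ _ _) (Stmt17Aux.combo_mem O hO _ _ _ _)
      (Stmt17Aux.combo_mem O hO _ _ _ _)
      (by ext <;> simp [Stmt17Aux.combo, QuaternionAlgebra.re_mul, QuaternionAlgebra.imI_mul, QuaternionAlgebra.imJ_mul, QuaternionAlgebra.imK_mul] <;> norm_num)
      (by ext <;> simp [Stmt17Aux.combo, QuaternionAlgebra.re_mul, QuaternionAlgebra.imI_mul, QuaternionAlgebra.imJ_mul, QuaternionAlgebra.imK_mul] <;> norm_num)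
      (by rw [hval, Stmt17Aux.two_mul_combo]; ext <;> simp [Stmt17Aux.combo] <;> push_cast <;> ring)
  · exact Stmt17Aux.good O c hc ha (Stmt17Aux.combo (-1) (0) (0) (1)) (Stmt17Aux.combo (0) (0) (0) (-1)) (Stmt17Aux.combo (m + 1) (n) (p) (q))
      (Stmt17Aux.combo_mem O hO _ _ _ _) (Stmt17Aux.combo_mem O hO _ _ _ _)
      (Stmt17Aux.combo_mem O hO _ _ _ _)
      (by ext <;> simp [Stmt17Aux.combo, QuaternionAlgebra.re_mul, QuaternionAlgebra.imI_mul, QuaternionAlgebra.imJ_mul, QuaternionAlgebra.imK_mul] <;> norm_num)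
      (by ext <;> simp [Stmt17Aux.combo, QuaternionAlgebra.re_mul, QuaternionAlgebra.imI_mul, QuaternionAlgebra.imJ_mul, QuaternionAlgebra.imK_mul] <;> norm_num)
      (by rw [hval, Stmt17Aux.two_mul_combo]; ext <;> simp [Stmt17Aux.combo] <;> push_cast <;> ring)
  · exact (Stmt17Aux.bad O hO hab' hba' (Stmt17Aux.combo (1) (0) (1) (0)) (Stmt17Aux.combo (0) (0) (1) (0)) (Stmt17Aux.combo m n p q)
      (Stmt17Aux.combo_mem O hO _ _ _ _) (Stmt17Aux.combo_mem O hO _ _ _ _)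
      (Stmt17Aux.combo_mem O hO _ _ _ _)
      (by rw [Stmt17Aux.two_mul_combo]; ext <;> simp [Stmt17Aux.combo, QuaternionAlgebra.re_mul, QuaternionAlgebra.imI_mul, QuaternionAlgebra.imJ_mul, QuaternionAlgebra.imK_mul] <;> norm_num)
      (by rw [hval, Stmt17Aux.two_mul_combo]; ext <;> simp [Stmt17Aux.combo] <;> push_cast <;> ring)).elim
  · exact Stmt17Aux.good O c hc ha (Stmt17Aux.combo (-1) (0) (-1) (1)) (Stmt17Aux.combo (0) (0) (1) (-1)) (Stmt17Aux.combo (m + 1) (n) (p + 1) (q))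
      (Stmt17Aux.combo_mem O hO _ _ _ _) (Stmt17Aux.combo_mem O hO _ _ _ _)
      (Stmt17Aux.combo_mem O hO _ _ _ _)
      (by ext <;> simp [Stmt17Aux.combo, QuaternionAlgebra.re_mul, QuaternionAlgebra.imI_mul, QuaternionAlgebra.imJ_mul, QuaternionAlgebra.imK_mul] <;> norm_num)
      (by ext <;> simp [Stmt17Aux.combo, QuaternionAlgebra.re_mul, QuaternionAlgebra.imI_mul, QuaternionAlgebra.imJ_mul, QuaternionAlgebra.imK_mul] <;> norm_num)
      (by rw [hval, Stmt17Aux.two_mul_combo]; ext <;> simp [Stmt17Aux.combo] <;> push_cast <;> ring)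
  · exact (Stmt17Aux.bad O hO hab' hba' (Stmt17Aux.combo (1) (1) (0) (0)) (Stmt17Aux.combo (0) (1) (0) (0)) (Stmt17Aux.combo m n p q)
      (Stmt17Aux.combo_mem O hO _ _ _ _) (Stmt17Aux.combo_mem O hO _ _ _ _)
      (Stmt17Aux.combo_mem O hO _ _ _ _)
      (by rw [Stmt17Aux.two_mul_combo]; ext <;> simp [Stmt17Aux.combo, QuaternionAlgebra.re_mul, QuaternionAlgebra.imI_mul, QuaternionAlgebra.imJ_mul, QuaternionAlgebra.imK_mul] <;> norm_num)
      (by rw [hval, Stmt17Aux.two_mul_combo]; ext <;> simp [Stmt17Aux.combo] <;> push_cast <;> ring)).elim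
  · exact Stmt17Aux.good O c hc ha (Stmt17Aux.combo (-1) (-1) (0) (1)) (Stmt17Aux.combo (0) (1) (0) (-1)) (Stmt17Aux.combo (m + 1) (n + 1) (p) (q))
      (Stmt17Aux.combo_mem O hO _ _ _ _) (Stmt17Aux.combo_mem O hO _ _ _ _)
      (Stmt17Aux.combo_mem O hO _ _ _ _)
      (by ext <;> simp [Stmt17Aux.combo, QuaternionAlgebra.re_mul, QuaternionAlgebra.imI_mul, QuaternionAlgebra.imJ_mul, QuaternionAlgebra.imK_mul] <;> norm_num)
      (by ext <;> simp [Stmt17Aux.combo, QuaternionAlgebra.re_mul, QuaternionAlgebra.imI_mul, QuaternionAlgebra.imJ_mul, QuaternionAlgebra.imK_mul] <;> norm_num)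
      (by rw [hval, Stmt17Aux.two_mul_combo]; ext <;> simp [Stmt17Aux.combo] <;> push_cast <;> ring)
  · exact Stmt17Aux.good O c hc ha (Stmt17Aux.combo (-1) (-1) (-1) (2)) (Stmt17Aux.combo (1) (1) (1) (-2)) (Stmt17Aux.combo (m + 1) (n + 1) (p + 1) (q - 1))
      (Stmt17Aux.combo_mem O hO _ _ _ _) (Stmt17Aux.combo_mem O hO _ _ _ _)
      (Stmt17Aux.combo_mem O hO _ _ _ _)
      (by ext <;> simp [Stmt17Aux.combo, QuaternionAlgebra.re_mul, QuaternionAlgebra.imI_mul, QuaternionAlgebra.imJ_mul, QuaternionAlgebra.imK_mul] <;> norm_num)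
      (by ext <;> simp [Stmt17Aux.combo, QuaternionAlgebra.re_mul, QuaternionAlgebra.imI_mul, QuaternionAlgebra.imJ_mul, QuaternionAlgebra.imK_mul] <;> norm_num)
      (by rw [hval, Stmt17Aux.two_mul_combo]; ext <;> simp [Stmt17Aux.combo] <;> push_cast <;> ring)
  · exact Stmt17Aux.good O c hc ha (Stmt17Aux.combo (-1) (-1) (-1) (1)) (Stmt17Aux.combo (0) (1) (1) (-1)) (Stmt17Aux.combo (m + 1) (n + 1) (p + 1) (q))
      (Stmt17Aux.combo_mem O hO _ _ _ _) (Stmt17Aux.combo_mem O hO _ _ _ _)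
      (Stmt17Aux.combo_mem O hO _ _ _ _)
      (by ext <;> simp [Stmt17Aux.combo, QuaternionAlgebra.re_mul, QuaternionAlgebra.imI_mul, QuaternionAlgebra.imJ_mul, QuaternionAlgebra.imK_mul] <;> norm_num)
      (by ext <;> simp [Stmt17Aux.combo, QuaternionAlgebra.re_mul, QuaternionAlgebra.imI_mul, QuaternionAlgebra.imJ_mul, QuaternionAlgebra.imK_mul] <;> norm_num)
      (by rw [hval, Stmt17Aux.two_mul_combo]; ext <;> simp [Stmt17Aux.combo] <;> push_cast <;> ring)
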